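/- arXiv:1707.00122 — 7 statements merged into one kernel-verified Lean document; each statement's English description precedes it below -/
import Mathlib

section
/- The function ψ(u,z) = b·e^{cz}·e^{√(1-2c²u)} / (1 + √(1-2c²u)) satisfies ψ ψ_u + u ψ_u² + (1/2) ψ_z² = 0 on a neighbourhood of (0,0). -/
/-- ψ(u,z) = b e^{cz} e^{√(1-2c²u)} / (1 + √(1-2c²u)) satisfies
    ψψ_u + uψ_u² + (1/2)ψ_z² = 0 on a neighbourhood of (0,0). -/
theorem stmt_2 (b : ℂ) (c : ℝ) (ψ : ℝ → ℝ → ℂ)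
    (hψ : ∀ u z : ℝ, ψ u z =
      b * Complex.exp ((c : ℂ) * (z : ℂ))
        * Complex.exp ((Real.sqrt (1 - 2 * c ^ 2 * u) : ℂ))
        / (1 + (Real.sqrt (1 - 2 * c ^ 2 * u) : ℂ))) :
    ∃ ε > (0 : ℝ), ∀ u z : ℝ, |u| < ε → |z| < ε →
      (ψ u z) * deriv (fun t => ψ t z) u
        + (u : ℂ) * (deriv (fun t => ψ t z) u) ^ 2
        + (1 / 2) * (deriv (fun t => ψ u t) z) ^ 2 = 0 := by
  refine ⟨1 / (2 * c ^ 2 + 1), by positivity, fun u z hu hz => ?_⟩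
  have hpos : 0 < 1 - 2 * c ^ 2 * u := by
    have h1 : 2 * c ^ 2 * |u| < 1 := by
      have : (2 * c ^ 2) * |u| < (2 * c ^ 2 + 1) * (1 / (2 * c ^ 2 + 1)) := by
        apply mul_lt_mul' (by linarith) hu (abs_nonneg u) (by positivity)
      rwa [mul_one_div, div_self (by positivity)] at this
    nlinarith [le_abs_self u, neg_abs_le u]
  set s : ℝ := Real.sqrt (1 - 2 * c ^ 2 * u) with hs_def
  have hs_pos : 0 < s := Real.sqrt_pos.mpr hpos
  have hs_sq : s ^ 2 = 1 - 2 * c ^ 2 * u := Real.sq_sqrt hpos.le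
  have hS1 : (1 : ℂ) + (s : ℂ) ≠ 0 := by
    have : ((1 + s : ℝ) : ℂ) ≠ 0 := by
      exact_mod_cast (by positivity : (1 + s : ℝ) ≠ 0)
    push_cast at this
    exact this
  -- derivative of the inner sqrt function
  have hf : HasDerivAt (fun t : ℝ => Real.sqrt (1 - 2 * c ^ 2 * t)) (-(c ^ 2) / s) u := by
    have hin : HasDerivAt (fun t : ℝ => 1 - 2 * c ^ 2 * t) (-(2 * c ^ 2)) u := by
      simpa using ((hasDerivAt_id u).const_mul (2 * c ^ 2)).const_sub 1
    have := (Real.hasDerivAt_sqrt hpos.ne').comp u hin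
    refine this.congr_deriv ?_
    rw [← hs_def]
    field_simp
  -- derivative of ψ in u
  have hD : HasDerivAt (fun t => ψ t z) (-(c ^ 2 : ℂ) * ψ u z / (1 + (s : ℂ))) u := by
    have hfc : HasDerivAt (fun t : ℝ => ((Real.sqrt (1 - 2 * c ^ 2 * t) : ℝ) : ℂ))
        ((-(c ^ 2) / s : ℝ) : ℂ) u := hf.ofReal_comp
    have hnum : HasDerivAt (fun t : ℝ => Complex.exp ((Real.sqrt (1 - 2 * c ^ 2 * t) : ℂ)))
        (Complex.exp (s : ℂ) * ((-(c ^ 2) / s : ℝ) : ℂ)) u := hfc.cexp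
    have hden : HasDerivAt (fun t : ℝ => (1 : ℂ) + (Real.sqrt (1 - 2 * c ^ 2 * t) : ℂ))
        ((-(c ^ 2) / s : ℝ) : ℂ) u := hfc.const_add 1
    have hdiv := (hnum.div hden hS1).const_mul (b * Complex.exp ((c : ℂ) * (z : ℂ)))
    have heq : (fun t => ψ t z) = fun t : ℝ =>
        b * Complex.exp ((c : ℂ) * (z : ℂ)) *
          (Complex.exp ((Real.sqrt (1 - 2 * c ^ 2 * t) : ℂ)) /
            (1 + (Real.sqrt (1 - 2 * c ^ 2 * t) : ℂ))) := by
      funext t; rw [hψ t z]; ring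
    rw [heq]
    refine hdiv.congr_deriv ?_
    rw [hψ u z]
    rw [← hs_def]
    have hsC : (s : ℂ) ≠ 0 := by exact_mod_cast hs_pos.ne'
    push_cast
    field_simp
    ring
  -- derivative of ψ in z
  have hZ : HasDerivAt (fun t => ψ u t) ((c : ℂ) * ψ u z) z := by
    have hc : HasDerivAt (fun t : ℝ => ((t : ℝ) : ℂ)) 1 z := by
      simpa using (hasDerivAt_id z).ofReal_comp
    have he : HasDerivAt (fun t : ℝ => Complex.exp ((c : ℂ) * (t : ℂ)))
        (Complex.exp ((c : ℂ) * (z : ℂ)) * ((c : ℂ) * 1)) z := ((hc.const_mul (c : ℂ))).cexp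
    have heq : (fun t => ψ u t) = fun t : ℝ =>
        (b * (Complex.exp ((s : ℂ)) / (1 + (s : ℂ)))) * Complex.exp ((c : ℂ) * (t : ℂ)) := by
      funext t; rw [hψ u t]; ring
    rw [heq]
    have := he.const_mul (b * (Complex.exp ((s : ℂ)) / (1 + (s : ℂ))))
    refine this.congr_deriv ?_
    rw [hψ u z]
    ring
  rw [hD.deriv, hZ.deriv]
  -- final algebra
  have hsq : ((s : ℂ)) ^ 2 = 1 - 2 * (c : ℂ) ^ 2 * (u : ℂ) := by
    exact_mod_cast congrArg (Complex.ofReal) hs_sq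
  set P := ψ u z
  field_simp
  ring_nf
  linear_combination (P ^ 2 * (c : ℂ) ^ 2) * hsq
end

section
/- Define f : ℕ → ℚ by f(0) = -1 and f(k) = (1/(k(k+1))) · C(2k-2, k-1) · (3/2)^{k-1} for k ≥ 1. Then f(1) = 1/2, and for every k ≥ 1: (k+1) f(k+1) = Σ_{m=0}^{k} [ (m+2)(k-m) f(m+1) f(k-m) + (1/2)(2m-1)(2k-2m-1) f(m) f(k-m) ]. -/
open Finset

def cQ (n : ℕ) : ℚ := (catalan n : ℚ)
def aQ (n : ℕ) : ℚ := cQ n / ((n : ℚ) + 2)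

lemma cQ_zero : cQ 0 = 1 := by simp [cQ]
lemma cQ_one : cQ 1 = 1 := by simp [cQ, catalan_one]

lemma rec1 (n : ℕ) : ((n : ℚ) + 2) * cQ (n + 1) = 2 * (2 * (n : ℚ) + 1) * cQ n := by
  have h1 : (n + 1) * catalan n = Nat.centralBinom n :=
    succ_mul_catalan_eq_centralBinom n
  have h2 : (n + 1 + 1) * catalan (n + 1) = Nat.centralBinom (n + 1) :=
    succ_mul_catalan_eq_centralBinom (n + 1)
  have h3 := Nat.succ_mul_centralBinom_succ n
  have key : (n + 1) * ((n + 2) * catalan (n + 1))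
      = (n + 1) * (2 * (2 * n + 1) * catalan n) := by
    calc (n + 1) * ((n + 2) * catalan (n + 1))
        = (n + 1) * ((n + 1 + 1) * catalan (n + 1)) := by ring
      _ = (n + 1) * Nat.centralBinom (n + 1) := by rw [h2]
      _ = 2 * (2 * n + 1) * Nat.centralBinom n := h3
      _ = 2 * (2 * n + 1) * ((n + 1) * catalan n) := by rw [h1]
      _ = (n + 1) * (2 * (2 * n + 1) * catalan n) := by ring
  have key2 := Nat.eq_of_mul_eq_mul_left (Nat.succ_pos n) key
  simp only [cQ]
  exact_mod_cast key2

lemma aQ_mul (n : ℕ) : ((n : ℚ) + 2) * aQ n = cQ n := by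
  have : ((n : ℚ) + 2) ≠ 0 := by positivity
  simp only [aQ]
  field_simp

lemma aQ_mul2 (n : ℕ) : (2 * (n : ℚ) + 1) * aQ n = cQ (n + 1) / 2 := by
  have h : ((n : ℚ) + 2) ≠ 0 := by positivity
  have := rec1 n
  simp only [aQ]
  field_simp
  linarith [rec1 n]

lemma aQ_eq (n : ℕ) : aQ n = (4 * cQ n - cQ (n + 1)) / 6 := by
  have h : ((n : ℚ) + 2) ≠ 0 := by positivity
  simp only [aQ]
  field_simp
  linarith [rec1 n]

lemma segner (n : ℕ) : cQ (n + 1) = ∑ j ∈ range (n + 1), cQ j * cQ (n - j) := by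
  have h : catalan (n + 1) = ∑ j ∈ range (n + 1), catalan j * catalan (n - j) := by
    rw [catalan_succ]
    exact (Finset.sum_range fun j => catalan j * catalan (n - j)).symm
  simp only [cQ, h]
  push_cast
  rfl

lemma triangle (g : ℕ → ℕ → ℚ) (n : ℕ) :
    ∑ j ∈ range n, ∑ i ∈ range (n - j), g j i
      = ∑ p ∈ range n, ∑ j ∈ range (p + 1), g j (p - j) := by
  induction n with
  | zero => simp
  | succ n ih =>
    rw [Finset.sum_range_succ (fun p => ∑ j ∈ range (p + 1), g j (p - j)), ← ih]
    rw [Finset.sum_range_succ (fun j => ∑ i ∈ range (n + 1 - j), g j i)]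
    have h1 : ∀ j ∈ range n,
        ∑ i ∈ range (n + 1 - j), g j i = ∑ i ∈ range (n - j), g j i + g j (n - j) := by
      intro j hj
      have hj' : j < n := mem_range.mp hj
      have e : n + 1 - j = (n - j) + 1 := by omega
      rw [e, Finset.sum_range_succ]
    rw [Finset.sum_congr rfl h1, Finset.sum_add_distrib]
    have e2 : n + 1 - n = 1 := by omega
    rw [e2, Finset.sum_range_one, Finset.sum_range_succ]
    have e3 : n - n = 0 := by omega
    rw [e3]
    ring

def W (n : ℕ) : ℚ := ∑ j ∈ range (n + 1), aQ j * cQ (n - j)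

lemma lemE1 (n : ℕ) : ∑ m ∈ range n, cQ (m + 1) * cQ (n - m - 1) = cQ (n + 1) - cQ n := by
  have h := segner n
  rw [Finset.sum_range_succ'] at h
  simp only [← Nat.sub_sub, Nat.sub_zero, cQ_zero, one_mul] at h
  linarith

lemma lemB3 (n : ℕ) : ∑ m ∈ range n, cQ (m + 1) * cQ (n - m) = cQ (n + 2) - 2 * cQ (n + 1) := by
  have h := segner (n + 1)
  rw [Finset.sum_range_succ'] at h
  have h2 : ∀ m ∈ range (n + 1), cQ (m + 1) * cQ (n + 1 - (m + 1)) = cQ (m + 1) * cQ (n - m) := by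
    intro m hm
    congr 2
    omega
  rw [Finset.sum_congr rfl h2, Finset.sum_range_succ] at h
  have e : n - n = 0 := by omega
  rw [e, cQ_zero] at h
  simp only [Nat.sub_zero, cQ_zero, one_mul] at h
  linarith

lemma lemE2 (n : ℕ) :
    ∑ p ∈ range n, cQ (p + 2) * cQ (n - p - 1) = cQ (n + 2) - cQ (n + 1) - cQ n := by
  have h := segner (n + 1)
  rw [Finset.sum_range_succ'] at h
  have h2 : ∀ m ∈ range (n + 1), cQ (m + 1) * cQ (n + 1 - (m + 1)) = cQ (m + 1) * cQ (n - m) := by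
    intro m hm; congr 2 <;> omega
  rw [Finset.sum_congr rfl h2, Finset.sum_range_succ'] at h
  have h3 : ∀ p ∈ range n, cQ (p + 1 + 1) * cQ (n - (p + 1)) = cQ (p + 2) * cQ (n - p - 1) := by
    intro p hp; congr 2 <;> omega
  rw [Finset.sum_congr rfl h3] at h
  simp only [Nat.sub_zero, Nat.zero_add, cQ_zero, cQ_one, one_mul] at h
  linarith

lemma lemB2 (n : ℕ) : ∑ m ∈ range n, cQ (m + 1) * aQ (n - m - 1) = W n - aQ n := by
  have h : W n = ∑ j ∈ range n, aQ j * cQ (n - j) + aQ n := by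
    rw [W, Finset.sum_range_succ]
    have e : n - n = 0 := by omega
    rw [e, cQ_zero, mul_one]
  have h2 := Finset.sum_range_reflect (fun j => aQ j * cQ (n - j)) n
  have h3 : ∀ m ∈ range n,
      aQ (n - 1 - m) * cQ (n - (n - 1 - m)) = cQ (m + 1) * aQ (n - m - 1) := by
    intro m hm
    have hm' : m < n := mem_range.mp hm
    have e1 : n - (n - 1 - m) = m + 1 := by omega
    have e2 : n - 1 - m = n - m - 1 := by omega
    rw [e1, e2, mul_comm]
  rw [h, ← h2, Finset.sum_congr rfl h3]
  ring

lemma Wrec (n : ℕ) : W n = aQ n + ∑ p ∈ range n, W p * cQ (n - p - 1) := by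
  have h : W n = ∑ j ∈ range n, aQ j * cQ (n - j) + aQ n := by
    rw [W, Finset.sum_range_succ]
    have e : n - n = 0 := by omega
    rw [e, cQ_zero, mul_one]
  have h1 : ∀ j ∈ range n,
      aQ j * cQ (n - j) = ∑ i ∈ range (n - j), aQ j * (cQ i * cQ (n - j - 1 - i)) := by
    intro j hj
    have hj' : j < n := mem_range.mp hj
    have e : cQ (n - j) = ∑ i ∈ range (n - j), cQ i * cQ (n - j - 1 - i) := by
      have e2 : n - j = (n - j - 1) + 1 := by omega
      rw [show cQ (n - j) = cQ ((n - j - 1) + 1) from by rw [← e2], segner]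
      apply Finset.sum_congr
      · congr 1
        omega
      · intro i _
        rfl
    rw [e, Finset.mul_sum]
  rw [h, Finset.sum_congr rfl h1, triangle (fun j i => aQ j * (cQ i * cQ (n - j - 1 - i))) n]
  have h2 : ∀ p ∈ range n,
      (∑ j ∈ range (p + 1), aQ j * (cQ (p - j) * cQ (n - j - 1 - (p - j))))
        = W p * cQ (n - p - 1) := by
    intro p hp
    have hp' : p < n := mem_range.mp hp
    have h3 : ∀ j ∈ range (p + 1),
        aQ j * (cQ (p - j) * cQ (n - j - 1 - (p - j)))
          = aQ j * cQ (p - j) * cQ (n - p - 1) := by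
      intro j hj
      have hj' : j < p + 1 := mem_range.mp hj
      have e : n - j - 1 - (p - j) = n - p - 1 := by omega
      rw [e]; ring
    rw [Finset.sum_congr rfl h3, ← Finset.sum_mul, W]
  rw [Finset.sum_congr rfl h2]
  ring

lemma Wclosed (n : ℕ) : W n = (5 * cQ (n + 1) - cQ (n + 2)) / 6 := by
  induction n using Nat.strong_induction_on with
  | _ n ih =>
    rw [Wrec]
    have h1 : ∀ p ∈ range n, W p * cQ (n - p - 1)
        = 5 / 6 * (cQ (p + 1) * cQ (n - p - 1)) - 1 / 6 * (cQ (p + 2) * cQ (n - p - 1)) := by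
      intro p hp
      rw [ih p (mem_range.mp hp)]
      ring
    rw [Finset.sum_congr rfl h1, Finset.sum_sub_distrib, ← Finset.mul_sum, ← Finset.mul_sum,
      lemE1, lemE2, aQ_eq]
    ring

lemma term_eq (m j : ℕ) :
    ((m : ℚ) + 1 + 2) * ((j : ℚ) + 1) * (aQ (m + 1) * (3 / 2 : ℚ) ^ (m + 1))
        * (aQ j * (3 / 2 : ℚ) ^ j)
      + 1 / 2 * (2 * ((m : ℚ) + 1) - 1) * (2 * ((j : ℚ) + 1) - 1)
        * (aQ m * (3 / 2 : ℚ) ^ m) * (aQ j * (3 / 2 : ℚ) ^ j)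
    = cQ (m + 1) * (cQ j - aQ j) * (3 / 2 : ℚ) ^ (m + 1 + j)
      + 1 / 8 * (cQ (m + 1) * cQ (j + 1)) * (3 / 2 : ℚ) ^ (m + j) := by
  have hm2 : ((m : ℚ) + 2) ≠ 0 := by positivity
  have hm3 : ((m : ℚ) + 3) ≠ 0 := by positivity
  have hj2 : ((j : ℚ) + 2) ≠ 0 := by positivity
  have hm1 : 2 * (m : ℚ) + 1 ≠ 0 := by positivity
  have h1 : cQ m = ((m : ℚ) + 2) * cQ (m + 1) / (2 * (2 * (m : ℚ) + 1)) := by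
    have := rec1 m
    field_simp
    linarith
  have h2 : cQ (j + 1) = 2 * (2 * (j : ℚ) + 1) * cQ j / ((j : ℚ) + 2) := by
    have := rec1 j
    field_simp
    linarith
  simp only [aQ, h1, h2]
  push_cast
  field_simp
  ring

lemma pow_split (m j : ℕ) : (3 / 2 : ℚ) ^ (m + 1 + j) = (3 / 2 : ℚ) ^ (m + 1) * (3 / 2 : ℚ) ^ j :=
  pow_add _ _ _


/-- f(0) = -1, f(k) = (1/(k(k+1))) C(2k-2,k-1) (3/2)^{k-1} satisfies
    f(1) = 1/2 and the quadratic recurrence (k+1)f(k+1) = Σ_{m=0}^k {...}. -/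
theorem stmt_5 (f : ℕ → ℚ) (h0 : f 0 = -1)
    (hf : ∀ k : ℕ, 1 ≤ k →
      f k = (1 / ((k : ℚ) * ((k : ℚ) + 1))) * ((2 * k - 2).choose (k - 1) : ℚ)
        * (3 / 2) ^ (k - 1)) :
    f 1 = 1 / 2 ∧
    ∀ k : ℕ, 1 ≤ k →
      ((k : ℚ) + 1) * f (k + 1) =
        ∑ m ∈ Finset.range (k + 1),
          (((m : ℚ) + 2) * ((k : ℚ) - (m : ℚ)) * f (m + 1) * f (k - m)
            + (1 / 2) * (2 * (m : ℚ) - 1) * (2 * (k : ℚ) - 2 * (m : ℚ) - 1)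
              * f m * f (k - m)) := by
  have hfa : ∀ m : ℕ, f (m + 1) = aQ m * (3 / 2 : ℚ) ^ m := by
    intro m
    have h := hf (m + 1) (by omega)
    have e1 : 2 * (m + 1) - 2 = 2 * m := by omega
    have e2 : m + 1 - 1 = m := by omega
    rw [e1, e2] at h
    have hcb : ((2 * m).choose m : ℚ) = ((m : ℚ) + 1) * cQ m := by
      have h' : (m + 1) * catalan m = (2 * m).choose m :=
        succ_mul_catalan_eq_centralBinom m
      simp only [cQ]
      exact_mod_cast h'.symm
    rw [hcb] at h
    rw [h]
    have hm1 : ((m : ℚ) + 1) ≠ 0 := by positivity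
    have hm2 : ((m : ℚ) + 2) ≠ 0 := by positivity
    simp only [aQ]
    push_cast
    field_simp
    ring
  have hf1 : f 1 = 1 / 2 := by
    have := hfa 0
    simp only [pow_zero, mul_one, zero_add] at this
    rw [this, aQ, cQ_zero]
    norm_num
  refine ⟨hf1, ?_⟩
  intro k hk
  obtain ⟨n, rfl⟩ : ∃ n, k = n + 1 := ⟨k - 1, by omega⟩
  rw [Finset.sum_range_succ, Finset.sum_range_succ']
  have hterm : ∀ m ∈ range n,
      ((((m + 1 : ℕ) : ℚ) + 2) * (((n + 1 : ℕ) : ℚ) - ((m + 1 : ℕ) : ℚ)) * f (m + 1 + 1)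
          * f (n + 1 - (m + 1))
        + 1 / 2 * (2 * ((m + 1 : ℕ) : ℚ) - 1)
          * (2 * ((n + 1 : ℕ) : ℚ) - 2 * ((m + 1 : ℕ) : ℚ) - 1)
          * f (m + 1) * f (n + 1 - (m + 1)))
      = cQ (m + 1) * (cQ (n - m - 1) - aQ (n - m - 1)) * (3 / 2 : ℚ) ^ n
        + 1 / 8 * (cQ (m + 1) * cQ (n - m)) * (3 / 2 : ℚ) ^ (n - 1) := by
    intro m hm
    have hm' : m < n := mem_range.mp hm
    obtain ⟨j, rfl⟩ : ∃ j, n = m + 1 + j := ⟨n - m - 1, by omega⟩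
    have e1 : m + 1 + j - m - 1 = j := by omega
    have e2 : m + 1 + j - m = j + 1 := by omega
    have e3 : m + 1 + j + 1 - (m + 1) = j + 1 := by omega
    have e4 : m + 1 + j - 1 = m + j := by omega
    rw [e1, e2, e3, e4, hfa (m + 1), hfa j, hfa m]
    push_cast
    linear_combination term_eq m j
  rw [Finset.sum_congr rfl hterm]
  have hsplit : ∑ m ∈ range n,
      (cQ (m + 1) * (cQ (n - m - 1) - aQ (n - m - 1)) * (3 / 2 : ℚ) ^ n
        + 1 / 8 * (cQ (m + 1) * cQ (n - m)) * (3 / 2 : ℚ) ^ (n - 1))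
      = ((cQ (n + 1) - cQ n) - (W n - aQ n)) * (3 / 2 : ℚ) ^ n
        + 1 / 8 * (cQ (n + 2) - 2 * cQ (n + 1)) * (3 / 2 : ℚ) ^ (n - 1) := by
    have h1 : ∀ m ∈ range n,
        cQ (m + 1) * (cQ (n - m - 1) - aQ (n - m - 1)) * (3 / 2 : ℚ) ^ n
          + 1 / 8 * (cQ (m + 1) * cQ (n - m)) * (3 / 2 : ℚ) ^ (n - 1)
        = (cQ (m + 1) * cQ (n - m - 1)) * (3 / 2 : ℚ) ^ n
          - (cQ (m + 1) * aQ (n - m - 1)) * (3 / 2 : ℚ) ^ n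
          + (cQ (m + 1) * cQ (n - m)) * (1 / 8 * (3 / 2 : ℚ) ^ (n - 1)) := by
      intro m _
      ring
    rw [Finset.sum_congr rfl h1]
    simp only [Finset.sum_add_distrib, Finset.sum_sub_distrib, ← Finset.sum_mul]
    rw [lemE1, lemB2, lemB3]
    ring
  rw [hsplit]
  simp only [Nat.sub_self, Nat.sub_zero, h0, hf1, Nat.cast_zero]
  rw [hfa (n + 1), hfa n, Wclosed]
  rcases n with _ | nn
  · norm_num [aQ, cQ, catalan_one, catalan_two]
  · have e5 : nn + 1 - 1 = nn := by omega
    rw [e5]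
    have h1 : cQ (nn + 2) = 2 * (2 * (nn : ℚ) + 3) * cQ (nn + 1) / ((nn : ℚ) + 3) := by
      have := rec1 (nn + 1)
      push_cast at this
      have h3 : ((nn : ℚ) + 3) ≠ 0 := by positivity
      field_simp
      linarith
    have h2 : cQ (nn + 3) = 2 * (2 * (nn : ℚ) + 5) * cQ (nn + 2) / ((nn : ℚ) + 4) := by
      have := rec1 (nn + 2)
      push_cast at this
      have h4 : ((nn : ℚ) + 4) ≠ 0 := by positivity
      field_simp
      linarith
    simp only [show nn + 1 + 1 = nn + 2 from by omega, show nn + 1 + 2 = nn + 3 from by omega]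
    simp only [aQ]
    rw [h2, h1]
    push_cast
    have h3 : ((nn : ℚ) + 3) ≠ 0 := by positivity
    have h4 : ((nn : ℚ) + 4) ≠ 0 := by positivity
    field_simp
    ring
end

section
/- Define f : ℕ → ℚ by f(0) = -1 and f(k) = (-1)^k (2k-2)! / (2^k k! (k-1)!) for k ≥ 1. Then for every k ≥ 1: (k+1) f(k+1) = -Σ_{m=0}^{k} [ m(k-m) f(m+1) f(k-m) + (1/2)(2m-1)(2k-2m-1) f(m) f(k-m) ]. -/
open PowerSeries Finset

/-- `(2n)! = catalan n * n! * (n+1)!`. -/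
lemma fact_two_mul_eq_catalan (n : ℕ) :
    (2 * n).factorial = catalan n * n.factorial * (n + 1).factorial := by
  have h1 : (2 * n).choose n * n.factorial * n.factorial = (2 * n).factorial := by
    have := Nat.choose_mul_factorial_mul_factorial (show n ≤ 2 * n by omega)
    simpa [show 2 * n - n = n by omega] using this
  have h2 : (n + 1) * catalan n = (2 * n).choose n := by
    rw [succ_mul_catalan_eq_centralBinom, Nat.centralBinom_eq_two_mul_choose]
  calc (2 * n).factorial = (2 * n).choose n * n.factorial * n.factorial := h1.symm
    _ = ((n + 1) * catalan n) * n.factorial * n.factorial := by rw [h2]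
    _ = catalan n * n.factorial * ((n + 1) * n.factorial) := by ring
    _ = catalan n * n.factorial * (n + 1).factorial := by rw [Nat.factorial_succ]

/-- f(0) = -1, f(k) = (-1)^k (2k-2)!/(2^k k! (k-1)!) satisfies
    (k+1)f(k+1) = -Σ_{m=0}^k { m(k-m) f(m+1)f(k-m) + (1/2)(2m-1)(2k-2m-1) f(m)f(k-m) }. -/
theorem stmt_6 (f : ℕ → ℚ) (h0 : f 0 = -1)
    (hf : ∀ k : ℕ, 1 ≤ k →
      f k = (-1) ^ k * ((2 * k - 2).factorial : ℚ)
        / (2 ^ k * (k.factorial : ℚ) * ((k - 1).factorial : ℚ))) :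
    ∀ k : ℕ, 1 ≤ k →
      ((k : ℚ) + 1) * f (k + 1) =
        -∑ m ∈ Finset.range (k + 1),
          ((m : ℚ) * ((k : ℚ) - (m : ℚ)) * f (m + 1) * f (k - m)
            + (1 / 2) * (2 * (m : ℚ) - 1) * (2 * (k : ℚ) - 2 * (m : ℚ) - 1)
              * f m * f (k - m)) := by
  -- closed form via Catalan numbers
  have hfc : ∀ n : ℕ, f (n + 1) = (-1) ^ (n + 1) * (catalan n : ℚ) / 2 ^ (n + 1) := by
    intro n
    have h := hf (n + 1) (by omega)
    rw [show 2 * (n + 1) - 2 = 2 * n by omega, Nat.add_sub_cancel,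
      fact_two_mul_eq_catalan] at h
    rw [h]
    have hn : ((n.factorial : ℚ)) ≠ 0 := by positivity
    have hn1 : (((n + 1).factorial : ℚ)) ≠ 0 := by positivity
    push_cast
    field_simp
  -- the middle convolution sum
  have hmid : ∀ j : ℕ, ∑ m ∈ range (j + 1), f (m + 1) * f (j + 1 - m) = f (j + 2) := by
    intro j
    have hcat : ((catalan (j + 1) : ℚ)) = ∑ m ∈ range (j + 1),
        (catalan m : ℚ) * (catalan (j - m) : ℚ) := by
      rw [catalan_succ']
      rw [Finset.Nat.sum_antidiagonal_eq_sum_range_succ_mk]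
      push_cast
      rfl
    calc ∑ m ∈ range (j + 1), f (m + 1) * f (j + 1 - m)
        = ∑ m ∈ range (j + 1),
            (-1 : ℚ) ^ (j + 2) * ((catalan m : ℚ) * (catalan (j - m) : ℚ)) / 2 ^ (j + 2) := by
          refine Finset.sum_congr rfl fun m hm => ?_
          have hmj : m ≤ j := by
            have := Finset.mem_range.mp hm; omega
          rw [show j + 1 - m = (j - m) + 1 by omega, hfc m, hfc (j - m)]
          have e1 : (-1 : ℚ) ^ (m + 1) * (-1 : ℚ) ^ ((j - m) + 1) = (-1 : ℚ) ^ (j + 2) := by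
            rw [← pow_add]; congr 1; omega
          have e2 : (2 : ℚ) ^ (m + 1) * 2 ^ ((j - m) + 1) = 2 ^ (j + 2) := by
            rw [← pow_add]; congr 1; omega
          rw [div_mul_div_comm, e2]
          congr 1
          linear_combination ((catalan m : ℚ) * (catalan (j - m) : ℚ)) * e1
      _ = (-1 : ℚ) ^ (j + 2) * (catalan (j + 1) : ℚ) / 2 ^ (j + 2) := by
          rw [← Finset.sum_div, ← Finset.mul_sum, hcat]
      _ = f (j + 2) := (hfc (j + 1)).symm
  -- the basic quadratic relation: 2Y² + 2Y = X
  have hconv : ∀ n : ℕ, (∑ m ∈ range (n + 1), f m * f (n - m)) + f n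
      = if n = 1 then (1 : ℚ) / 2 else 0 := by
    intro n
    match n with
    | 0 => simp [h0]
    | 1 =>
      have h1 : f 1 = -(1 : ℚ) / 2 := by
        have := hfc 0; simpa [catalan_zero] using this
      simp [Finset.sum_range_succ, h0, h1]
      norm_num
    | (j + 2) =>
      have hS : ∑ m ∈ range (j + 2 + 1), f m * f (j + 2 - m) = -f (j + 2) := by
        rw [Finset.sum_range_succ' (fun m => f m * f (j + 2 - m)) (j + 2)]
        rw [Finset.sum_range_succ]
        have : ∑ i ∈ range (j + 1), f (i + 1) * f (j + 2 - (i + 1))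
            = ∑ i ∈ range (j + 1), f (i + 1) * f (j + 1 - i) := by
          refine Finset.sum_congr rfl fun i hi => ?_
          rw [show j + 2 - (i + 1) = j + 1 - i by omega]
        rw [this, hmid j]
        simp [h0]
      rw [hS]
      simp
  have hP : (PowerSeries.mk f : ℚ⟦X⟧) * PowerSeries.mk f + PowerSeries.mk f * PowerSeries.mk f + PowerSeries.mk f + PowerSeries.mk f = X := by
    ext n
    simp only [map_add, coeff_mul, Finset.Nat.sum_antidiagonal_eq_sum_range_succ_mk,
      coeff_mk, coeff_X]
    have h := hconv n
    split_ifs at h ⊢ <;> linarith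
  -- apply the formal derivative
  set D : ℚ⟦X⟧ := derivative ℚ (PowerSeries.mk f : ℚ⟦X⟧) with hD
  have hQ : (PowerSeries.mk f : ℚ⟦X⟧) * D + PowerSeries.mk f * D + PowerSeries.mk f * D + PowerSeries.mk f * D + D + D = 1 := by
    have h := congrArg (fun φ => derivative ℚ φ) hP
    simp only [map_add, Derivation.leibniz, smul_eq_mul, derivative_X, ← hD] at h
    linear_combination h
  -- the main power-series identity (doubled)
  have hH : D * (D * X) + D * (D * X) + D * (D * X) + D * (D * X)
      + ((D * X) * (D * X) + (D * X) * (D * X) + (D * X) * (D * X) + (D * X) * (D * X)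
        + (D * X) * (D * X) + (D * X) * (D * X) + (D * X) * (D * X) + (D * X) * (D * X))
      + ((PowerSeries.mk f : ℚ⟦X⟧) * PowerSeries.mk f + PowerSeries.mk f * PowerSeries.mk f)
      = (PowerSeries.mk f : ℚ⟦X⟧) * D + PowerSeries.mk f * D + PowerSeries.mk f * D + PowerSeries.mk f * D
        + ((D * X) * PowerSeries.mk f + (D * X) * PowerSeries.mk f + (D * X) * PowerSeries.mk f + (D * X) * PowerSeries.mk f
          + (D * X) * PowerSeries.mk f + (D * X) * PowerSeries.mk f + (D * X) * PowerSeries.mk f + (D * X) * PowerSeries.mk f) := by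
    linear_combination (-1 - 8 * X * D ^ 2 + 8 * (PowerSeries.mk f : ℚ⟦X⟧) * D) * hP
      + (X + 2 * X * (2 * (PowerSeries.mk f : ℚ⟦X⟧) + 1) * D - 4 * (PowerSeries.mk f : ℚ⟦X⟧) ^ 2
          - 2 * (PowerSeries.mk f : ℚ⟦X⟧)) * hQ
  -- coefficient lemmas
  have cD : ∀ n : ℕ, coeff n D = ((n : ℚ) + 1) * f (n + 1) := by
    intro n
    rw [hD, coeff_derivative, coeff_mk]
    push_cast; ring
  have cDX : ∀ n : ℕ, coeff n (D * X) = (n : ℚ) * f n := by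
    rintro (_ | n)
    · simp [coeff_zero_mul_X]
    · rw [coeff_succ_mul_X, cD]; push_cast; ring
  intro k hk
  -- extract coefficient k of hH
  have eA : coeff k (D * (D * X))
      = ∑ m ∈ range (k + 1), ((m : ℚ) + 1) * f (m + 1) * (((k - m : ℕ) : ℚ) * f (k - m)) := by
    rw [coeff_mul, Finset.Nat.sum_antidiagonal_eq_sum_range_succ_mk]
    refine Finset.sum_congr rfl fun m hm => ?_
    rw [cD, cDX]
  have eB : coeff k ((D * X) * (D * X))
      = ∑ m ∈ range (k + 1), (m : ℚ) * f m * (((k - m : ℕ) : ℚ) * f (k - m)) := by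
    rw [coeff_mul, Finset.Nat.sum_antidiagonal_eq_sum_range_succ_mk]
    refine Finset.sum_congr rfl fun m hm => ?_
    rw [cDX, cDX]
  have eC : coeff k ((PowerSeries.mk f : ℚ⟦X⟧) * D)
      = ∑ m ∈ range (k + 1), f m * ((((k - m : ℕ) : ℚ) + 1) * f ((k - m) + 1)) := by
    rw [coeff_mul, Finset.Nat.sum_antidiagonal_eq_sum_range_succ_mk]
    refine Finset.sum_congr rfl fun m hm => ?_
    rw [coeff_mk, cD]
  have eE : coeff k ((D * X) * (PowerSeries.mk f : ℚ⟦X⟧))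
      = ∑ m ∈ range (k + 1), (m : ℚ) * f m * f (k - m) := by
    rw [coeff_mul, Finset.Nat.sum_antidiagonal_eq_sum_range_succ_mk]
    refine Finset.sum_congr rfl fun m hm => ?_
    rw [coeff_mk, cDX]
  have eF : coeff k ((PowerSeries.mk f : ℚ⟦X⟧) * PowerSeries.mk f)
      = ∑ m ∈ range (k + 1), f m * f (k - m) := by
    rw [coeff_mul, Finset.Nat.sum_antidiagonal_eq_sum_range_succ_mk]
    refine Finset.sum_congr rfl fun m hm => ?_
    rw [coeff_mk, coeff_mk]
  have hs := congrArg (coeff k) hH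
  simp only [map_add, eA, eB, eC, eE, eF] at hs
  -- reindexing lemma for the Y*D sum
  have hCsum : ∑ m ∈ range (k + 1), f m * ((((k - m : ℕ) : ℚ) + 1) * f ((k - m) + 1))
      = (∑ m ∈ range (k + 1), f (m + 1) * (((k - m : ℕ) : ℚ) * f (k - m)))
        - ((k : ℚ) + 1) * f (k + 1) := by
    rw [Finset.sum_range_succ' (fun m => f m * ((((k - m : ℕ) : ℚ) + 1) * f ((k - m) + 1))) k]
    rw [Finset.sum_range_succ (fun m => f (m + 1) * (((k - m : ℕ) : ℚ) * f (k - m))) k]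
    have h1 : ∀ i ∈ range k, f (i + 1) * ((((k - (i + 1) : ℕ) : ℚ) + 1) * f ((k - (i + 1)) + 1))
        = f (i + 1) * (((k - i : ℕ) : ℚ) * f (k - i)) := by
      intro i hi
      have hik : i < k := Finset.mem_range.mp hi
      have h2 : k - (i + 1) + 1 = k - i := by omega
      have h3 : ((k - (i + 1) : ℕ) : ℚ) + 1 = ((k - i : ℕ) : ℚ) := by
        rw [← h2]; push_cast; ring
      rw [h2, h3]
    rw [Finset.sum_congr rfl h1]
    simp [h0]
    ring
  -- symmetry lemma
  have hE2 : ∑ m ∈ range (k + 1), ((k : ℚ) - (m : ℚ)) * f m * f (k - m)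
      = ∑ m ∈ range (k + 1), (m : ℚ) * f m * f (k - m) := by
    rw [← Finset.sum_range_reflect (fun m => (m : ℚ) * f m * f (k - m)) (k + 1)]
    refine Finset.sum_congr rfl fun m hm => ?_
    have hmk : m ≤ k := by have := Finset.mem_range.mp hm; omega
    rw [show k + 1 - 1 - m = k - m by omega, show k - (k - m) = m by omega]
    rw [Nat.cast_sub hmk]
    ring
  -- decompose the target sum
  have hT : ∑ m ∈ range (k + 1),
        ((m : ℚ) * ((k : ℚ) - (m : ℚ)) * f (m + 1) * f (k - m)
          + (1 / 2) * (2 * (m : ℚ) - 1) * (2 * (k : ℚ) - 2 * (m : ℚ) - 1)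
            * f m * f (k - m))
      = ∑ m ∈ range (k + 1), (((m : ℚ) + 1) * f (m + 1) * (((k - m : ℕ) : ℚ) * f (k - m))
          - f (m + 1) * (((k - m : ℕ) : ℚ) * f (k - m))
          + ((m : ℚ) * f m * (((k - m : ℕ) : ℚ) * f (k - m))
            + (m : ℚ) * f m * (((k - m : ℕ) : ℚ) * f (k - m)))
          - (m : ℚ) * f m * f (k - m)
          - ((k : ℚ) - (m : ℚ)) * f m * f (k - m)
          + f m * f (k - m) / 2) := by
    refine Finset.sum_congr rfl fun m hm => ?_
    have hmk : m ≤ k := by have := Finset.mem_range.mp hm; omega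
    rw [Nat.cast_sub hmk]
    ring
  simp only [Finset.sum_add_distrib, Finset.sum_sub_distrib, ← Finset.sum_div] at hT
  simp only [Finset.sum_add_distrib]
  linarith [hs, hCsum, hE2, hT]
end

section
/- For every integer k ≥ 2: Σ_{j=1}^{k-1} (2j-1)!(2k-2j-1)! / ((j-1)!² (k-j-1)!²) = 2^{2k-5} k(k-1). -/
open Finset

private def cb (n : ℕ) : ℚ := n.centralBinom

private lemma cb_rec (m : ℕ) : ((m : ℚ) + 1) * cb (m + 1) = 2 * (2 * m + 1) * cb m := by
  have h := Nat.succ_mul_centralBinom_succ m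
  unfold cb
  exact_mod_cast h

private lemma cb_zero : cb 0 = 1 := by
  unfold cb; norm_num [Nat.centralBinom]

private lemma conv_S0 (n : ℕ) :
    ∑ p ∈ range (n + 1), cb p * cb (n - p) = 4 ^ n := by
  induction n with
  | zero => simp [cb_zero]
  | succ n ih =>
    have key : ∀ p ∈ range (n + 1),
        ((n : ℚ) + 1) * (cb p * cb (n + 1 - p) - 4 * (cb p * cb (n - p)))
          = (fun j : ℕ => -(j : ℚ) * cb j * cb (n + 1 - j)) (p + 1)
            - (fun j : ℕ => -(j : ℚ) * cb j * cb (n + 1 - j)) p := by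
      intro p hp
      rw [Finset.mem_range] at hp
      obtain ⟨q, rfl⟩ : ∃ q, n = p + q := ⟨n - p, by omega⟩
      have e1 : p + q + 1 - p = q + 1 := by omega
      have e2 : p + q - p = q := by omega
      have e3 : p + q + 1 - (p + 1) = q := by omega
      simp only [e1, e2, e3]
      push_cast
      linear_combination cb q * cb_rec p + cb p * cb_rec q
    have tele := Finset.sum_range_sub (fun j : ℕ => -(j : ℚ) * cb j * cb (n + 1 - j)) (n + 1)
    have h1 : ∑ p ∈ range (n + 1),
        ((n : ℚ) + 1) * (cb p * cb (n + 1 - p) - 4 * (cb p * cb (n - p)))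
        = -((n : ℚ) + 1) * cb (n + 1) := by
      rw [Finset.sum_congr rfl key, tele]
      simp [cb_zero]
    rw [← Finset.mul_sum] at h1
    have hn : ((n : ℚ) + 1) ≠ 0 := by positivity
    have h2 : ∑ p ∈ range (n + 1),
        (cb p * cb (n + 1 - p) - 4 * (cb p * cb (n - p))) = -cb (n + 1) := by
      have := mul_left_cancel₀ hn (h1.trans (by ring : -((n : ℚ) + 1) * cb (n + 1) = ((n : ℚ) + 1) * (-cb (n + 1))))
      exact this
    rw [Finset.sum_sub_distrib, ← Finset.mul_sum, ih] at h2
    rw [Finset.sum_range_succ]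
    have e4 : n + 1 - (n + 1) = 0 := by omega
    rw [e4, cb_zero]
    have : ∑ p ∈ range (n + 1), cb p * cb (n + 1 - p) = 4 * 4 ^ n - cb (n + 1) := by
      linarith [h2]
    rw [this]; ring

private lemma conv_S2 (n : ℕ) :
    ∑ p ∈ range (n + 1), ((p * (n - p) : ℕ) : ℚ) * (cb p * cb (n - p))
      = 4 ^ n * n * ((n : ℚ) - 1) / 8 := by
  induction n with
  | zero => simp
  | succ n ih =>
    have key : ∀ p ∈ range (n + 1),
        2 * (((p * (n + 1 - p) : ℕ) : ℚ) * (cb p * cb (n + 1 - p))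
            - 4 * (((p * (n - p) : ℕ) : ℚ) * (cb p * cb (n - p)))
            - (n : ℚ) * (cb p * cb (n - p)))
          = (fun j : ℕ => -(j : ℚ) * ((n + 1 - j : ℕ) : ℚ) * cb j * cb (n + 1 - j)) (p + 1)
            - (fun j : ℕ => -(j : ℚ) * ((n + 1 - j : ℕ) : ℚ) * cb j * cb (n + 1 - j)) p := by
      intro p hp
      rw [Finset.mem_range] at hp
      obtain ⟨q, rfl⟩ : ∃ q, n = p + q := ⟨n - p, by omega⟩
      have e1 : p + q + 1 - p = q + 1 := by omega
      have e2 : p + q - p = q := by omega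
      have e3 : p + q + 1 - (p + 1) = q := by omega
      simp only [e1, e2, e3]
      push_cast
      linear_combination (q : ℚ) * cb q * cb_rec p + (p : ℚ) * cb p * cb_rec q
    have tele := Finset.sum_range_sub
      (fun j : ℕ => -(j : ℚ) * ((n + 1 - j : ℕ) : ℚ) * cb j * cb (n + 1 - j)) (n + 1)
    have h1 : ∑ p ∈ range (n + 1),
        2 * (((p * (n + 1 - p) : ℕ) : ℚ) * (cb p * cb (n + 1 - p))
            - 4 * (((p * (n - p) : ℕ) : ℚ) * (cb p * cb (n - p)))
            - (n : ℚ) * (cb p * cb (n - p))) = 0 := by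
      rw [Finset.sum_congr rfl key, tele]
      simp
    rw [← Finset.mul_sum] at h1
    have h2 : ∑ p ∈ range (n + 1),
        (((p * (n + 1 - p) : ℕ) : ℚ) * (cb p * cb (n + 1 - p))
            - 4 * (((p * (n - p) : ℕ) : ℚ) * (cb p * cb (n - p)))
            - (n : ℚ) * (cb p * cb (n - p))) = 0 := by
      have h20 : (2:ℚ) ≠ 0 := by norm_num
      exact mul_left_cancel₀ h20 (by rw [h1]; ring)
    rw [Finset.sum_sub_distrib, Finset.sum_sub_distrib, ← Finset.mul_sum, ← Finset.mul_sum,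
      ih, conv_S0] at h2
    rw [Finset.sum_range_succ]
    have e4 : (n + 1) * (n + 1 - (n + 1)) = 0 := by simp
    rw [e4]
    have : ∑ p ∈ range (n + 1), ((p * (n + 1 - p) : ℕ) : ℚ) * (cb p * cb (n + 1 - p))
        = 4 * (4 ^ n * n * ((n : ℚ) - 1) / 8) + (n : ℚ) * 4 ^ n := by linarith [h2]
    rw [this]
    push_cast
    ring


/-- Σ_{j=1}^{k-1} (2j-1)!(2k-2j-1)!/((j-1)!²(k-j-1)!²) = 2^{2k-5} k(k-1)
    for k ≥ 2. -/
theorem stmt_10 (k : ℕ) (hk : 2 ≤ k) :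
    ∑ j ∈ Finset.Icc 1 (k - 1),
      (((2 * j - 1).factorial : ℚ) * ((2 * k - 2 * j - 1).factorial : ℚ))
        / (((j - 1).factorial : ℚ) ^ 2 * (((k - j - 1).factorial : ℚ)) ^ 2)
      = (2 : ℚ) ^ (2 * (k : ℤ) - 5) * (k : ℚ) * ((k : ℚ) - 1) := by
  obtain ⟨m, rfl⟩ : ∃ m, k = m + 2 := ⟨k - 2, by omega⟩
  clear hk
  have hIcc : m + 2 - 1 = m + 1 := by omega
  rw [hIcc, ← Finset.Ico_add_one_right_eq_Icc, Finset.sum_Ico_eq_sum_range]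
  have hrange : m + 1 + 1 - 1 = m + 1 := by omega
  rw [hrange]
  have hterm : ∀ i ∈ range (m + 1),
      (((2 * (1 + i) - 1).factorial : ℚ) * ((2 * (m + 2) - 2 * (1 + i) - 1).factorial : ℚ))
        / ((((1 + i) - 1).factorial : ℚ) ^ 2 * ((((m + 2) - (1 + i) - 1).factorial : ℚ)) ^ 2)
      = 4 * (((i * (m - i) : ℕ) : ℚ) * (cb i * cb (m - i)))
        + (2 * (m : ℚ) + 1) * (cb i * cb (m - i)) := by
    intro i hi
    simp only [Finset.mem_range] at hi
    obtain ⟨r, rfl⟩ : ∃ r, m = i + r := ⟨m - i, by omega⟩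
    have e1 : 2 * (1 + i) - 1 = 2 * i + 1 := by omega
    have e2 : 2 * (i + r + 2) - 2 * (1 + i) - 1 = 2 * r + 1 := by omega
    have e3 : (1 + i) - 1 = i := by omega
    have e4 : (i + r + 2) - (1 + i) - 1 = r := by omega
    have e5 : i + r - i = r := by omega
    rw [e1, e2, e3, e4, e5]
    have hci : ((2 * i).factorial : ℚ) = cb i * (i.factorial : ℚ) * (i.factorial : ℚ) := by
      unfold cb
      rw [Nat.centralBinom]
      have := Nat.choose_mul_factorial_mul_factorial (show i ≤ 2 * i by omega)
      have e : 2 * i - i = i := by omega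
      rw [e] at this
      exact_mod_cast this.symm
    have hcr : ((2 * r).factorial : ℚ) = cb r * (r.factorial : ℚ) * (r.factorial : ℚ) := by
      unfold cb
      rw [Nat.centralBinom]
      have := Nat.choose_mul_factorial_mul_factorial (show r ≤ 2 * r by omega)
      have e : 2 * r - r = r := by omega
      rw [e] at this
      exact_mod_cast this.symm
    have hfi : ((2 * i + 1).factorial : ℚ) = (2 * i + 1) * ((2 * i).factorial : ℚ) := by
      rw [Nat.factorial_succ]; push_cast; ring
    have hfr : ((2 * r + 1).factorial : ℚ) = (2 * r + 1) * ((2 * r).factorial : ℚ) := by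
      rw [Nat.factorial_succ]; push_cast; ring
    rw [hfi, hfr, hci, hcr]
    have hi0 : (i.factorial : ℚ) ≠ 0 := by exact_mod_cast i.factorial_ne_zero
    have hr0 : (r.factorial : ℚ) ≠ 0 := by exact_mod_cast r.factorial_ne_zero
    field_simp
    push_cast
    ring
  rw [Finset.sum_congr rfl hterm, Finset.sum_add_distrib, ← Finset.mul_sum, ← Finset.mul_sum,
    conv_S2, conv_S0]
  have hzpow : (2 : ℚ) ^ (2 * ((m : ℤ) + 2) - 5) = 4 ^ m / 2 := by
    have : 2 * ((m : ℤ) + 2) - 5 = 2 * (m : ℤ) - 1 := by ring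
    rw [this, zpow_sub₀ (by norm_num : (2:ℚ) ≠ 0)]
    have h2m : (2 : ℚ) ^ (2 * (m : ℤ)) = 4 ^ m := by
      rw [show 2 * (m : ℤ) = ((2 * m : ℕ) : ℤ) by push_cast; ring, zpow_natCast,
        pow_mul]
      norm_num
    rw [h2m]
    norm_num
  push_cast
  rw [hzpow]
  field_simp
  ring
end

section
/- For every integer m ≥ 0: Σ_{j=0}^{m} (2j+1)(2m-2j+1) C(2j, j) C(2m-2j, m-j) = 2^{2m-1} (m+1)(m+2). -/
open Finset

private def Aq (j : ℕ) : ℚ := (2 * j + 1) * ((2 * j).choose j : ℚ)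

private lemma Aq_rec (k : ℕ) : ((k : ℚ) + 1) * Aq (k + 1) = 2 * (2 * k + 3) * Aq k := by
  have h := Nat.succ_mul_centralBinom_succ k
  simp only [Nat.centralBinom] at h
  have h' : ((k : ℚ) + 1) * ((2 * (k + 1)).choose (k + 1) : ℚ)
      = 2 * (2 * (k : ℚ) + 1) * ((2 * k).choose k : ℚ) := by
    exact_mod_cast congrArg (Nat.cast (R := ℚ)) h
  simp only [Aq]
  push_cast
  linear_combination (2 * (k : ℚ) + 3) * h'

private def Tq (m : ℕ) : ℚ := ∑ j ∈ range (m + 1), Aq j * Aq (m - j)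

private lemma sym (m : ℕ) :
    2 * ∑ j ∈ range (m + 1), (j : ℚ) * (Aq j * Aq (m - j)) = m * Tq m := by
  have hrefl : ∑ j ∈ range (m + 1), (j : ℚ) * (Aq j * Aq (m - j))
      = ∑ j ∈ range (m + 1), ((m - j : ℕ) : ℚ) * (Aq (m - j) * Aq j) := by
    rw [← Finset.sum_range_reflect]
    apply Finset.sum_congr rfl
    intro j hj
    have hj' : j ≤ m := Nat.lt_succ_iff.mp (Finset.mem_range.mp hj)
    have : m + 1 - 1 - j = m - j := by omega
    rw [this]
    have : m - (m - j) = j := by omega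
    rw [this]
  rw [two_mul]
  nth_rewrite 2 [hrefl]
  rw [Tq, ← Finset.sum_add_distrib, Finset.mul_sum]
  apply Finset.sum_congr rfl
  intro j hj
  have hj' : j ≤ m := Nat.lt_succ_iff.mp (Finset.mem_range.mp hj)
  have hc : ((m - j : ℕ) : ℚ) = (m : ℚ) - j := by
    rw [Nat.cast_sub hj']
  rw [hc]; ring

private lemma Tq_val (m : ℕ) : Tq m = 4 ^ m * ((m : ℚ) + 1) * ((m : ℚ) + 2) / 2 := by
  induction m with
  | zero => simp [Tq, Aq]
  | succ m ih =>
    have hS : ∑ j ∈ range (m + 2), (j : ℚ) * (Aq j * Aq (m + 1 - j))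
        = 4 * ∑ j ∈ range (m + 1), (j : ℚ) * (Aq j * Aq (m - j)) + 6 * Tq m := by
      rw [Finset.sum_range_succ']
      simp only [Nat.cast_zero, zero_mul, add_zero]
      rw [Tq, Finset.mul_sum, Finset.mul_sum, ← Finset.sum_add_distrib]
      apply Finset.sum_congr rfl
      intro k hk
      have h1 : m + 1 - (k + 1) = m - k := by omega
      rw [h1]
      have h2 : ((k : ℚ) + 1) * Aq (k + 1) = 2 * (2 * k + 3) * Aq k := Aq_rec k
      push_cast
      have : ((k : ℚ) + 1) * (Aq (k + 1) * Aq (m - k))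
          = (2 * (2 * (k : ℚ) + 3) * Aq k) * Aq (m - k) := by
        rw [← h2]; ring
      linear_combination this
    have hsym1 := sym (m + 1)
    have hsym0 := sym m
    have key : ((m : ℚ) + 1) * Tq (m + 1) = (4 * m + 12) * Tq m := by
      push_cast at hsym1
      rw [hS] at hsym1
      linarith [hsym0]
    have hne : ((m : ℚ) + 1) ≠ 0 := by positivity
    rw [ih] at key
    field_simp at key ⊢
    refine mul_left_cancel₀ hne ?_
    push_cast
    linear_combination ((m : ℚ) + 1) * key

/-- Σ_{j=0}^m (2j+1)(2m-2j+1) C(2j,j) C(2m-2j,m-j) = 2^{2m-1}(m+1)(m+2). -/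
theorem stmt_11 (m : ℕ) :
    ∑ j ∈ Finset.range (m + 1),
      (2 * (j : ℚ) + 1) * (2 * (m : ℚ) - 2 * (j : ℚ) + 1)
        * ((2 * j).choose j : ℚ) * ((2 * m - 2 * j).choose (m - j) : ℚ)
      = (2 : ℚ) ^ (2 * (m : ℤ) - 1) * ((m : ℚ) + 1) * ((m : ℚ) + 2) := by
  have hL : ∑ j ∈ Finset.range (m + 1),
      (2 * (j : ℚ) + 1) * (2 * (m : ℚ) - 2 * (j : ℚ) + 1)
        * ((2 * j).choose j : ℚ) * ((2 * m - 2 * j).choose (m - j) : ℚ) = Tq m := by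
    rw [Tq]
    apply Finset.sum_congr rfl
    intro j hj
    have hj' : j ≤ m := Nat.lt_succ_iff.mp (Finset.mem_range.mp hj)
    have h1 : 2 * m - 2 * j = 2 * (m - j) := by omega
    rw [h1]
    simp only [Aq]
    have hc : ((m - j : ℕ) : ℚ) = (m : ℚ) - j := Nat.cast_sub hj'
    rw [hc]; ring
  have hR : (2 : ℚ) ^ (2 * (m : ℤ) - 1) = 4 ^ m / 2 := by
    rw [zpow_sub₀ (by norm_num : (2:ℚ) ≠ 0)]
    have : (2 : ℚ) ^ (2 * (m : ℤ)) = 4 ^ m := by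
      rw [show 2 * (m : ℤ) = ((2 * m : ℕ) : ℤ) by push_cast; ring, zpow_natCast,
        pow_mul]
      norm_num
    rw [this]; norm_num
  rw [hL, hR, Tq_val]; ring
end

section
/- For every integer k ≥ 2: Σ_{m=1}^{k-1} [ C(2m, m) C(2k-2m-2, k-m-1) / ((m+1)(k-m+1)) ] = (1/(12(k+2))) C(2k+2, k+1) + (1/(2(k+2))) C(2k, k) - (1/(k+1)) C(2k-2, k-1). -/
open Finset

/-- central binomial in ℚ via catalan -/
lemma cb_eq (n : ℕ) : (((2 * n).choose n : ℕ) : ℚ) = ((n : ℚ) + 1) * catalan n := by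
  have h := succ_mul_catalan_eq_centralBinom n
  have : ((n + 1) * catalan n : ℕ) = (2 * n).choose n := by
    rw [h]; rfl
  exact_mod_cast this.symm

/-- catalan recurrence in ℚ -/
lemma cat_rec (n : ℕ) : ((n : ℚ) + 2) * catalan (n + 1) = 2 * (2 * n + 1) * catalan n := by
  have h : (n + 1) * ((n + 1 + 1) * catalan (n+1)) = 2 * (2 * n + 1) * ((n + 1) * catalan n) := by
    rw [succ_mul_catalan_eq_centralBinom, succ_mul_catalan_eq_centralBinom]
    exact Nat.succ_mul_centralBinom_succ n
  have hq : ((n:ℚ) + 1) * (((n:ℚ) + 1 + 1) * catalan (n+1)) = 2 * (2 * (n:ℚ) + 1) * (((n:ℚ) + 1) * catalan n) := by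
    exact_mod_cast h
  have hne : ((n:ℚ)) + 1 ≠ 0 := by positivity
  apply mul_left_cancel₀ hne
  linear_combination hq

/-- convolution in ℚ over range -/
lemma cat_conv (n : ℕ) :
    ((catalan (n + 1) : ℕ) : ℚ) = ∑ i ∈ range (n + 1), (catalan i : ℚ) * catalan (n - i) := by
  have h := catalan_succ n
  rw [Fin.sum_univ_eq_sum_range (fun i => catalan i * catalan (n - i)) (n+1)] at h
  exact_mod_cast h

lemma conv1 (n : ℕ) :
    ∑ m ∈ Finset.Icc 1 (n + 1), (catalan m : ℚ) * catalan (n + 1 - m)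
      = (catalan (n + 2) : ℚ) - catalan (n + 1) := by
  have h := cat_conv (n + 1)
  have hr : range (n + 2) = insert 0 (Finset.Icc 1 (n + 1)) := by
    ext x; simp [Finset.mem_range, Finset.mem_Icc]; omega
  rw [hr, Finset.sum_insert (by simp)] at h
  simp only [Nat.sub_zero, catalan_zero, Nat.cast_one, one_mul] at h
  linarith [h]

lemma conv2 (n : ℕ) :
    ∑ m ∈ Finset.Icc 1 (n + 1), (catalan m : ℚ) * catalan (n + 2 - m)
      = (catalan (n + 3) : ℚ) - 2 * catalan (n + 2) := by
  have h := cat_conv (n + 2)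
  have hr : range (n + 3) = insert 0 (insert (n + 2) (Finset.Icc 1 (n + 1))) := by
    ext x; simp [Finset.mem_range, Finset.mem_Icc]; omega
  rw [hr, Finset.sum_insert (by simp), Finset.sum_insert (by simp)] at h
  simp only [Nat.sub_zero, Nat.sub_self, catalan_zero, Nat.cast_one, one_mul, mul_one] at h
  linarith [h]

theorem stmt_13 (k : ℕ) (hk : 2 ≤ k) :
    ∑ m ∈ Finset.Icc 1 (k - 1),
      (((2 * m).choose m : ℚ) * ((2 * k - 2 * m - 2).choose (k - m - 1) : ℚ))
        / (((m : ℚ) + 1) * ((k : ℚ) - (m : ℚ) + 1))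
    = (1 / (12 * ((k : ℚ) + 2))) * ((2 * k + 2).choose (k + 1) : ℚ)
      + (1 / (2 * ((k : ℚ) + 2))) * ((2 * k).choose k : ℚ)
      - (1 / ((k : ℚ) + 1)) * ((2 * k - 2).choose (k - 1) : ℚ) := by
  obtain ⟨n, rfl⟩ : ∃ n, k = n + 2 := ⟨k - 2, by omega⟩
  have hsum : ∑ m ∈ Finset.Icc 1 (n + 2 - 1),
      (((2 * m).choose m : ℚ) * ((2 * (n+2) - 2 * m - 2).choose ((n+2) - m - 1) : ℚ))
        / (((m : ℚ) + 1) * (((n+2 : ℕ) : ℚ) - (m : ℚ) + 1))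
      = ∑ m ∈ Finset.Icc 1 (n + 1),
        ((1/3 : ℚ) * ((catalan m : ℚ) * catalan (n + 1 - m))
          + (1/6 : ℚ) * ((catalan m : ℚ) * catalan (n + 2 - m))) := by
    rw [show n + 2 - 1 = n + 1 from rfl]
    apply Finset.sum_congr rfl
    intro m hm
    rw [Finset.mem_Icc] at hm
    obtain ⟨j, hj⟩ : ∃ j, n + 1 = m + j := ⟨n + 1 - m, by omega⟩
    have h1 : 2 * (n + 2) - 2 * m - 2 = 2 * j := by omega
    have h2 : (n + 2) - m - 1 = j := by omega
    have h3 : n + 1 - m = j := by omega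
    have h4 : n + 2 - m = j + 1 := by omega
    have h5 : ((n + 2 : ℕ) : ℚ) - (m : ℚ) + 1 = (j : ℚ) + 2 := by
      have : (n : ℚ) + 1 = (m : ℚ) + j := by exact_mod_cast hj
      push_cast; linarith
    rw [h1, h2, h3, h4, h5, cb_eq m, cb_eq j]
    have hrec := cat_rec j
    rw [div_eq_iff (by positivity : ((m:ℚ)+1) * ((j:ℚ)+2) ≠ 0)]
    linear_combination (-(((m:ℚ)+1) * (catalan m : ℚ))/6) * hrec
  rw [hsum, Finset.sum_add_distrib, ← Finset.mul_sum, ← Finset.mul_sum, conv1 n, conv2 n]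
  have e1 : (((2 * (n+2) + 2).choose ((n+2) + 1) : ℕ) : ℚ) = ((n:ℚ) + 4) * catalan (n + 3) := by
    have := cb_eq (n + 3)
    rw [show 2 * (n + 2) + 2 = 2 * (n + 3) from by ring, show (n + 2) + 1 = n + 3 from rfl, this]
    push_cast; ring
  have e2 : (((2 * (n+2)).choose (n+2) : ℕ) : ℚ) = ((n:ℚ) + 3) * catalan (n + 2) := by
    have := cb_eq (n + 2); rw [this]; push_cast; ring
  have e3 : (((2 * (n+2) - 2).choose ((n+2) - 1) : ℕ) : ℚ) = ((n:ℚ) + 2) * catalan (n + 1) := by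
    have := cb_eq (n + 1)
    rw [show 2 * (n + 2) - 2 = 2 * (n + 1) from by omega, show (n + 2) - 1 = n + 1 from rfl, this]
    push_cast; ring
  rw [e1, e2, e3]
  have h1 := cat_rec (n + 2)
  have h2 := cat_rec (n + 1)
  push_cast at h1 h2 ⊢
  have hn4 : ((n:ℚ) + 4) ≠ 0 := by positivity
  have hn3 : ((n:ℚ) + 3) ≠ 0 := by positivity
  have e4 : (catalan (n+3) : ℚ) = 2*(2*(n:ℚ)+5) * catalan (n+2) / ((n:ℚ)+4) := by
    rw [eq_div_iff hn4]; linear_combination h1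
  have e5 : (catalan (n+2) : ℚ) = 2*(2*(n:ℚ)+3) * catalan (n+1) / ((n:ℚ)+3) := by
    rw [eq_div_iff hn3]; linear_combination h2
  rw [e4, e5]
  field_simp
  ring
end

section
/- For every integer k ≥ 2: Σ_{m=1}^{k-1} [ C(2m, m) C(2k-2m-2, k-m-1) / ((m+1)(k-m)(k-m+1)) ] = (1/6) [ -((k-1)/((k+2)(2k+1))) C(2k+2, k+1) + (6(k-1)/((k+1)(2k-1))) C(2k, k) ]. -/
set_option maxHeartbeats 1000000

/-- Central binomial recurrence over ℚ. -/
lemma cbq_succ (n : ℕ) :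
    ((n : ℚ) + 1) * (Nat.centralBinom (n + 1) : ℚ)
      = 2 * (2 * (n : ℚ) + 1) * (Nat.centralBinom n : ℚ) := by
  have h := Nat.succ_mul_centralBinom_succ n
  have h' := congrArg (fun x : ℕ => (x : ℚ)) h
  push_cast at h'
  linarith

/-- The Gosper-style telescoping step identity, in purely rational form. -/
lemma step_key (I J a b : ℚ) (h2 : I+2 ≠ 0) (h3 : I+3 ≠ 0) (j1 : J+1 ≠ 0)
    (j2 : J+2 ≠ 0) (j3 : J+3 ≠ 0) (q3 : I+J+3 ≠ 0) (q4 : I+J+4 ≠ 0) (q5 : I+J+5 ≠ 0) :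
    a * (2*(2*J+1)*b/(J+1)) / ((I+2)*(J+2)*(J+3))
    = (3 * (1 - 2 * (I+J+3)) * (I+J+3) * ((I+J+3) + 1)
          + (-8 + 13 * (I+J+3) + 27 * (I+J+3) ^ 2 - 6 * (I+J+3) ^ 3) * (I+2)
          + (-16 - 30 * (I+J+3) + 30 * (I+J+3) ^ 2) * (I+2) ^ 2
          + (8 - 40 * (I+J+3)) * (I+2) ^ 3 + 16 * (I+2) ^ 4)
        * (2*(2*I+3)*a/(I+2)) * b / ((3*(I+J+3)*(I+J+4)*(I+J+5))*(I+3)*(J+1)*(J+2))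
    - (3 * (1 - 2 * (I+J+3)) * (I+J+3) * ((I+J+3) + 1)
          + (-8 + 13 * (I+J+3) + 27 * (I+J+3) ^ 2 - 6 * (I+J+3) ^ 3) * (I+1)
          + (-16 - 30 * (I+J+3) + 30 * (I+J+3) ^ 2) * (I+1) ^ 2
          + (8 - 40 * (I+J+3)) * (I+1) ^ 3 + 16 * (I+1) ^ 4)
        * a * (2*(2*J+1)*b/(J+1)) / ((3*(I+J+3)*(I+J+4)*(I+J+5))*(I+2)*(J+2)*(J+3)) := by
  field_simp
  ring

/-- Σ_{m=1}^{k-1} C(2m,m)C(2k-2m-2,k-m-1)/((m+1)(k-m)(k-m+1))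
    = (1/6)[ -((k-1)/((k+2)(2k+1))) C(2k+2,k+1) + (6(k-1)/((k+1)(2k-1))) C(2k,k) ]. -/
theorem stmt_14 (k : ℕ) (hk : 2 ≤ k) :
    ∑ m ∈ Finset.Icc 1 (k - 1),
      (((2 * m).choose m : ℚ) * ((2 * k - 2 * m - 2).choose (k - m - 1) : ℚ))
        / (((m : ℚ) + 1) * ((k : ℚ) - (m : ℚ)) * ((k : ℚ) - (m : ℚ) + 1))
    = (1 / 6) * (-((((k : ℚ) - 1) / (((k : ℚ) + 2) * (2 * (k : ℚ) + 1)))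
          * ((2 * k + 2).choose (k + 1) : ℚ))
        + (6 * ((k : ℚ) - 1) / (((k : ℚ) + 1) * (2 * (k : ℚ) - 1)))
          * ((2 * k).choose k : ℚ)) := by
  obtain ⟨K, rfl⟩ : ∃ K, k = K + 2 := ⟨k - 2, by omega⟩
  clear hk
  -- the Gosper certificate polynomial N(x) (with k = K + 2)
  set Kq : ℚ := (K : ℚ) with hKq
  set N : ℚ → ℚ → ℚ := fun q x =>
    3 * (1 - 2 * (q + 2)) * (q + 2) * (q + 3) + (-8 + 13 * (q + 2) + 27 * (q + 2) ^ 2 - 6 * (q + 2) ^ 3) * x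
      + (-16 - 30 * (q + 2) + 30 * (q + 2) ^ 2) * x ^ 2 + (8 - 40 * (q + 2)) * x ^ 3 + 16 * x ^ 4 with hN
  set D : ℚ → ℚ := fun q => 3 * (q + 2) * (q + 3) * (q + 4) with hD
  -- the telescoping function
  set g : ℕ → ℚ := fun i =>
    N Kq ((i : ℚ) + 1) * (Nat.centralBinom (i + 1) : ℚ) * (Nat.centralBinom (K - i) : ℚ)
      / (D Kq * ((i : ℚ) + 2) * (((K - i : ℕ) : ℚ) + 1) * (((K - i : ℕ) : ℚ) + 2)) with hg
  -- rewrite the sum as a range sum with explicit summand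
  have hstep1 : ∑ m ∈ Finset.Icc 1 (K + 2 - 1),
      (((2 * m).choose m : ℚ) * ((2 * (K + 2) - 2 * m - 2).choose ((K + 2) - m - 1) : ℚ))
        / (((m : ℚ) + 1) * (((K + 2 : ℕ) : ℚ) - (m : ℚ)) * (((K + 2 : ℕ) : ℚ) - (m : ℚ) + 1))
      = ∑ i ∈ Finset.range (K + 1),
        ((Nat.centralBinom (i + 1) : ℚ) * (Nat.centralBinom (K - i) : ℚ))
          / (((i : ℚ) + 2) * (((K - i : ℕ) : ℚ) + 1) * (((K - i : ℕ) : ℚ) + 2)) := by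
    have h1 : K + 2 - 1 = K + 1 := by omega
    rw [h1, ← Finset.Ico_add_one_right_eq_Icc, Finset.sum_Ico_eq_sum_range]
    apply Finset.sum_congr (by norm_num)
    intro i hi
    simp only [Finset.mem_range] at hi
    have e1 : 2 * (K + 2) - 2 * (1 + i) - 2 = 2 * (K - i) := by omega
    have e2 : (K + 2) - (1 + i) - 1 = K - i := by omega
    have e3 : (2 * (1 + i)).choose (1 + i) = Nat.centralBinom (i + 1) := by
      rw [Nat.centralBinom_eq_two_mul_choose]; congr 1 <;> omega
    have e4 : (2 * (K - i)).choose (K - i) = Nat.centralBinom (K - i) := rfl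
    rw [e1, e2, e3, e4]
    have c1 : ((1 + i : ℕ) : ℚ) = 1 + (i : ℚ) := by push_cast; ring
    have c2 : ((K + 2 : ℕ) : ℚ) = (K : ℚ) + 2 := by push_cast; ring
    have hiK : i ≤ K := by omega
    have c3 : ((K - i : ℕ) : ℚ) = (K : ℚ) - (i : ℚ) := by
      push_cast [Nat.cast_sub hiK]
      ring
    rw [c1, c2, c3]
    ring_nf
  -- telescoping on range K
  have htel : ∑ i ∈ Finset.range K, (g (i + 1) - g i) = g K - g 0 :=
    Finset.sum_range_sub g K
  -- each summand (for i < K) equals g (i+1) - g i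
  have hstep : ∀ i ∈ Finset.range K,
      ((Nat.centralBinom (i + 1) : ℚ) * (Nat.centralBinom (K - i) : ℚ))
          / (((i : ℚ) + 2) * (((K - i : ℕ) : ℚ) + 1) * (((K - i : ℕ) : ℚ) + 2))
        = g (i + 1) - g i := by
    intro i hi
    simp only [Finset.mem_range] at hi
    obtain ⟨j, hj⟩ : ∃ j, K = i + j + 1 := ⟨K - i - 1, by omega⟩
    have e1 : K - i = j + 1 := by omega
    have e2 : K - (i + 1) = j := by omega
    have eK : Kq = (i : ℚ) + (j : ℚ) + 1 := by rw [hKq, hj]; push_cast; ring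
    rw [hg]
    simp only [e1, e2]
    -- central binomial recurrences
    have hc1 : (Nat.centralBinom (i + 1 + 1) : ℚ)
        = 2 * (2 * (i : ℚ) + 3) * (Nat.centralBinom (i + 1) : ℚ) / ((i : ℚ) + 2) := by
      have h := cbq_succ (i + 1)
      push_cast at h
      have h2 : (i : ℚ) + 2 ≠ 0 := by positivity
      field_simp
      linarith
    have hc2 : (Nat.centralBinom (j + 1) : ℚ)
        = 2 * (2 * (j : ℚ) + 1) * (Nat.centralBinom j : ℚ) / ((j : ℚ) + 1) := by
      have h := cbq_succ j
      have h2 : (j : ℚ) + 1 ≠ 0 := by positivity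
      field_simp
      linarith
    rw [hc1, hc2, eK]
    have hi2 : (i : ℚ) + 2 ≠ 0 := by positivity
    have hi3 : (i : ℚ) + 3 ≠ 0 := by positivity
    have hj1 : (j : ℚ) + 1 ≠ 0 := by positivity
    have hj2 : (j : ℚ) + 2 ≠ 0 := by positivity
    have hj3 : (j : ℚ) + 3 ≠ 0 := by positivity
    have hij3 : (i : ℚ) + (j : ℚ) + 3 ≠ 0 := by positivity
    have hij4 : (i : ℚ) + (j : ℚ) + 4 ≠ 0 := by positivity
    have hij5 : (i : ℚ) + (j : ℚ) + 5 ≠ 0 := by positivity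
    have key := step_key (i : ℚ) (j : ℚ) (Nat.centralBinom (i + 1) : ℚ)
      (Nat.centralBinom j : ℚ) hi2 hi3 hj1 hj2 hj3 hij3 hij4 hij5
    rw [hN, hD]
    push_cast
    push_cast at key
    linear_combination key
  -- combine: sum over range (K+1) = telescoped part + last term
  rw [hstep1, Finset.sum_range_succ, Finset.sum_congr rfl hstep, htel]
  -- now everything is explicit; reduce central binomials to cb K and finish
  have e0 : K - K = 0 := by omega
  rw [hg]
  simp only [e0, Nat.sub_zero, Nat.centralBinom_zero]
  -- binomials in the RHS are central binomials
  have r1 : (2 * (K + 2) + 2).choose (K + 2 + 1) = Nat.centralBinom (K + 3) := by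
    rw [Nat.centralBinom_eq_two_mul_choose]; congr 1 <;> omega
  have r2 : (2 * (K + 2)).choose (K + 2) = Nat.centralBinom (K + 2) := by
    rw [Nat.centralBinom_eq_two_mul_choose]
  rw [r1, r2]
  -- recurrences to bring everything down to centralBinom K
  have h1 : Kq + 1 ≠ 0 := by rw [hKq]; positivity
  have h2 : Kq + 2 ≠ 0 := by rw [hKq]; positivity
  have h3 : Kq + 3 ≠ 0 := by rw [hKq]; positivity
  have h4 : Kq + 4 ≠ 0 := by rw [hKq]; positivity
  have h5 : 2 * Kq + 1 ≠ 0 := by rw [hKq]; positivity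
  have h6 : 2 * Kq + 3 ≠ 0 := by rw [hKq]; positivity
  have h7 : 2 * Kq + 5 ≠ 0 := by rw [hKq]; positivity
  have hc1 : (Nat.centralBinom (K + 1) : ℚ)
      = 2 * (2 * Kq + 1) * (Nat.centralBinom K : ℚ) / (Kq + 1) := by
    have h := cbq_succ K
    rw [← hKq] at h
    field_simp
    linarith
  have hc2 : (Nat.centralBinom (K + 2) : ℚ)
      = 2 * (2 * Kq + 3) * (Nat.centralBinom (K + 1) : ℚ) / (Kq + 2) := by
    have h := cbq_succ (K + 1)
    push_cast at h
    rw [← hKq] at h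
    field_simp
    linarith
  have hc3 : (Nat.centralBinom (K + 3) : ℚ)
      = 2 * (2 * Kq + 5) * (Nat.centralBinom (K + 2) : ℚ) / (Kq + 3) := by
    have h := cbq_succ (K + 2)
    push_cast at h
    rw [← hKq] at h
    field_simp
    linarith
  have eKK : ((K + 2 : ℕ) : ℚ) = Kq + 2 := by rw [hKq]; push_cast; ring
  rw [hc3, hc2, hc1, eKK]
  have d1 : Kq + 2 + 1 = Kq + 3 := by ring
  have d2 : 2 * (Kq + 2) - 1 = 2 * Kq + 3 := by ring
  have d3 : Kq + 2 + 2 = Kq + 4 := by ring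
  have d4 : 2 * (Kq + 2) + 1 = 2 * Kq + 5 := by ring
  have d5 : Kq + 2 - 1 = Kq + 1 := by ring
  rw [d1, d2, d3, d4, d5]
  have hcb1 : Nat.centralBinom 1 = 2 := by decide
  simp only [hcb1, hN, hD]
  push_cast
  field_simp
  ring
end
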